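/- Theorem 1: the uncertain Shapley value equals a regular Shapley value with a shifted deterministic value function. Precisely, Φ̃_i(v,ν) = Φ_i(v') for all players i ∈ 𝒮, where v'(S) := v(S) + ∑_{j∈S} Γ_j and Γ_j is the mean bias of the marginal contributions of player j. -/

import Mathlib

open Finset MeasureTheory

/-- Shapley weight `w(S) = |S|! (N - |S| - 1)! / N!`. -/
noncomputable def w (N : Nat) (S : Finset (Fin N)) : Real :=
  (Nat.factorial S.card * Nat.factorial (N - S.card - 1) : Real) / (Nat.factorial N : Real)

/-- Shapley value of player `i` for the value function `v`. -/
noncomputable def Phi (N : Nat) (v : Finset (Fin N) -> Real) (i : Fin N) : Real :=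
  Finset.sum (Finset.univ.erase i).powerset (fun S => w N S * (v (insert i S) - v S))

/-- Noise of the marginal contribution of player `i`. -/
noncomputable def eps (N : Nat) {O : Type*} (nu : Finset (Fin N) -> O -> Real)
    (i : Fin N) (S : Finset (Fin N)) (om : O) : Real :=
  nu (insert i S) om - nu S om

/-- Mean bias of the marginal contributions of player `i`. -/
noncomputable def Gamma (N : Nat) {O : Type*} [MeasurableSpace O] (mu : Measure O)
    (nu : Finset (Fin N) -> O -> Real) (i : Fin N) : Real :=
  Finset.sum (Finset.univ.erase i).powerset (fun S => w N S * (integral mu (eps N nu i S)))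

/-- Uncertain Shapley value of player `i`. -/
noncomputable def PhiT (N : Nat) {O : Type*} [MeasurableSpace O] (mu : Measure O)
    (v : Finset (Fin N) -> Real) (nu : Finset (Fin N) -> O -> Real) (i : Fin N) : Real :=
  Finset.sum (Finset.univ.erase i).powerset
    (fun S => w N S * (v (insert i S) - v S + integral mu (eps N nu i S)))

lemma sum_w_eq_one (N : Nat) (i : Fin N) :
    Finset.sum (Finset.univ.erase i).powerset (fun S => w N S) = 1 := by
  have hcard : (Finset.univ.erase i).card = N - 1 := by
    rw [Finset.card_erase_of_mem (Finset.mem_univ i), Finset.card_univ, Fintype.card_fin]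
  rw [Finset.powerset_card_biUnion, Finset.sum_biUnion
    ((Finset.pairwise_disjoint_powersetCard _).set_pairwise _)]
  have h : ∀ k ∈ Finset.range ((Finset.univ.erase i).card + 1),
      (Finset.powersetCard k (Finset.univ.erase i)).sum (fun S => w N S)
        = (N : Real)⁻¹ := by
    intro k hk
    rw [Finset.mem_range, hcard] at hk
    have hkN : k ≤ N - 1 := Nat.lt_succ_iff.mp hk
    have hN : 1 ≤ N := i.pos
    have hconst : ∀ S ∈ Finset.powersetCard k (Finset.univ.erase i),
        w N S = (Nat.factorial k * Nat.factorial (N - k - 1) : Real) / (Nat.factorial N) := by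
      intro S hS
      rw [w, (Finset.mem_powersetCard.mp hS).2]
    rw [Finset.sum_congr rfl hconst, Finset.sum_const, Finset.card_powersetCard, hcard,
      nsmul_eq_mul]
    have key : (N - 1).choose k * (Nat.factorial k * Nat.factorial (N - k - 1))
        = Nat.factorial (N - 1) := by
      have := Nat.choose_mul_factorial_mul_factorial hkN
      rw [Nat.sub_right_comm] at this
      linarith [this]
    have hfac : (Nat.factorial N : Real) = N * Nat.factorial (N - 1) := by
      calc (Nat.factorial N : Real) = Nat.factorial ((N-1)+1) := by rw [Nat.sub_add_cancel hN]
        _ = (((N-1)+1 : ℕ) : Real) * Nat.factorial (N-1) := by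
              rw [Nat.factorial_succ]; push_cast; ring
        _ = N * Nat.factorial (N-1) := by rw [Nat.sub_add_cancel hN]
    have keyR : ((N - 1).choose k : Real) * (Nat.factorial k * Nat.factorial (N - k - 1))
        = Nat.factorial (N-1) := by exact_mod_cast congrArg (Nat.cast (R := ℝ)) key
    have h1 : (Nat.factorial (N-1) : Real) ≠ 0 := by positivity
    have h2 : (N : Real) ≠ 0 := (Nat.cast_pos.mpr hN).ne'
    rw [← mul_div_assoc, keyR, hfac]
    field_simp
  rw [Finset.sum_congr rfl h, Finset.sum_const, Finset.card_range, hcard, nsmul_eq_mul,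
    Nat.sub_add_cancel i.pos]
  exact mul_inv_cancel₀ (Nat.cast_pos.mpr i.pos).ne'

theorem uncertain_shapley_eq_shifted_regular (N : Nat) {O : Type*} [MeasurableSpace O]
    (mu : Measure O) [IsProbabilityMeasure mu]
    (v : Finset (Fin N) -> Real) (nu : Finset (Fin N) -> O -> Real)
    (hInt : ∀ S : Finset (Fin N), Integrable (nu S) mu) (i : Fin N) :
    PhiT N mu v nu i =
      Phi N (fun S => v S + Finset.sum S (fun j => Gamma N mu nu j)) i := by
  unfold PhiT Phi
  have h : ∀ S ∈ (Finset.univ.erase i).powerset,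
      w N S * ((v (insert i S) + (insert i S).sum (fun j => Gamma N mu nu j))
        - (v S + S.sum (fun j => Gamma N mu nu j)))
      = w N S * (v (insert i S) - v S) + w N S * Gamma N mu nu i := by
    intro S hS
    have hiS : i ∉ S := fun h =>
      (Finset.mem_erase.mp (Finset.mem_powerset.mp hS h)).1 rfl
    rw [Finset.sum_insert hiS]
    ring
  rw [Finset.sum_congr rfl h, Finset.sum_add_distrib, ← Finset.sum_mul, sum_w_eq_one N i,
    one_mul, Gamma]
  rw [← Finset.sum_add_distrib]
  exact Finset.sum_congr rfl (fun S _ => by ring)
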